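/- Let q be a prime power, and define h(Y,Z) = Y^{q+1} + Y^q Z + Z^{q+1}. Then for X in the algebraic closure of F_q: the element X satisfies h(X,1)·h(1,X) = 0 if and only if X ∈ F_{q³}, N(X) = 1 and N(X+1) = −1, where N is the norm from F_{q³} to F_q. -/
import Mathlib


/-- With `h(Y,Z) = Y^{q+1} + Y^q Z + Z^{q+1}`, an element `X` of the algebraic closure
satisfies `h(X,1)·h(1,X) = 0` iff `X ∈ F_{q³}`, `N(X) = 1` and `N(X+1) = −1`. -/
theorem stmt_11 (p k q : ℕ) (hp : Nat.Prime p) (hk : 0 < k) (hq : q = p ^ k)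
    (L : Type) [Field L] [Fintype L] (hL : Fintype.card L = q ^ 3)
    (X : AlgebraicClosure L) :
    (X ^ (q + 1) + X ^ q + 1) * (X ^ (q + 1) + X + 1) = 0 ↔
      ∃ Y : L, algebraMap L (AlgebraicClosure L) Y = X ∧
        Y ^ (q ^ 2 + q + 1) = 1 ∧ (Y + 1) ^ (q ^ 2 + q + 1) = -1 := by
  classical
  haveI : Fact p.Prime := ⟨hp⟩
  -- the characteristic of L is p
  obtain ⟨r, hr⟩ := CharP.exists L
  haveI := hr
  obtain ⟨n, hrprime, hcard⟩ := FiniteField.card L r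
  have hrp : r = p := by
    have h1 : r ^ (n : ℕ) = p ^ (k * 3) := by
      rw [← hcard, hL, hq, ← pow_mul]
    have h2 : r ∣ p ^ (k * 3) := h1 ▸ dvd_pow_self r n.pos.ne'
    exact (Nat.prime_dvd_prime_iff_eq hrprime hp).mp (hrprime.dvd_of_dvd_pow h2)
  haveI hLp : CharP L p := hrp ▸ hr
  haveI hcharF : CharP (AlgebraicClosure L) p :=
    charP_of_injective_algebraMap (algebraMap L (AlgebraicClosure L)).injective p
  have inj := (algebraMap L (AlgebraicClosure L)).injective
  -- Frobenius facts
  have hfrob : ∀ a b : AlgebraicClosure L, (a + b) ^ q = a ^ q + b ^ q := by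
    intro a b; rw [hq]; exact add_pow_char_pow a b p k
  have hneg1 : (-1 : AlgebraicClosure L) ^ q = -1 := by
    rw [hq]; exact neg_one_pow_char_pow (R := AlgebraicClosure L) (p := p) (n := k)
  have hfrobneg : ∀ a : AlgebraicClosure L, (-a) ^ q = -a ^ q := by
    intro a; rw [neg_pow, hneg1, neg_one_mul]
  constructor
  · -- forward direction
    intro hAB
    obtain ⟨v, hv⟩ : ∃ v : AlgebraicClosure L, v = X + 1 := ⟨_, rfl⟩
    have hvq : v ^ q = X ^ q + 1 := by rw [hv, hfrob X 1, one_pow]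
    -- In either case we derive the two norm equations for X
    have hNuv : X ^ (q ^ 2 + q + 1) = 1 ∧ v ^ (q ^ 2 + q + 1) = -1 := by
      rcases mul_eq_zero.mp hAB with hA | hB
      · -- case h(X,1) = 0
        have hv1 : X ^ q * v = -1 := by rw [hv]; linear_combination hA
        have h2 : (X ^ q) ^ q * v ^ q = -1 := by rw [← mul_pow, hv1, hneg1]
        have h4 : v ^ (q + 1) = X := by linear_combination v * hvq + hv1 + hv
        have h5 : (v ^ (q + 1)) ^ q = X ^ q := by rw [h4]
        have hNv : v ^ (q ^ 2 + q + 1) = -1 := by linear_combination v * h5 + hv1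
        have h7 : (X ^ q) ^ q * X = -v := by
          linear_combination v * h2 - (X ^ q) ^ q * h4
        have hNu : X ^ (q ^ 2 + q + 1) = 1 := by
          linear_combination X ^ q * h7 - hv1
        exact ⟨hNu, hNv⟩
      · -- case h(1,X) = 0
        have hd : X * v ^ q = -1 := by linear_combination X * hvq + hB
        have ha : X ^ (q + 1) = -v := by linear_combination hB + hv
        have hb : (X ^ (q + 1)) ^ q = -v ^ q := by rw [ha, hfrobneg]
        have hNu : X ^ (q ^ 2 + q + 1) = 1 := by linear_combination X * hb - hd
        have hX0 : X ≠ 0 := by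
          intro h
          rw [h, zero_mul] at hd
          exact (neg_ne_zero.mpr (one_ne_zero)) hd.symm
        have hf : v ^ (q + 1) = X ^ q := by
          linear_combination v * hvq + (X ^ q + 1) * hv + hB
        have hg : (v ^ (q + 1)) ^ q = (X ^ q) ^ q := by rw [hf]
        have he : X ^ q * (v ^ q) ^ q = -1 := by rw [← mul_pow, hd, hneg1]
        have hvq2 : (v ^ q) ^ q = (X ^ q) ^ q + 1 := by
          rw [hvq, hfrob (X ^ q) 1, one_pow]
        have hG : X ^ q * ((X ^ q) ^ q * v) = X ^ q * (-1) := by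
          linear_combination v * he - X ^ q * v * hvq2 - ha - X ^ q * hv
        have hc2 : (X ^ q) ^ q * v = -1 :=
          mul_left_cancel₀ (pow_ne_zero q hX0) hG
        have hNv : v ^ (q ^ 2 + q + 1) = -1 := by linear_combination v * hg + hc2
        exact ⟨hNu, hNv⟩
    obtain ⟨hNu, hNv⟩ := hNuv
    -- X is fixed by the q³-power map
    have hX3 : X ^ (q ^ 3) = X := by
      have h1 : (X ^ (q ^ 2 + q + 1)) ^ q = 1 := by rw [hNu, one_pow]
      linear_combination X * h1 - X ^ (q ^ 3) * hNu
    -- hence X lies in the image of L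
    have hmem : ∃ Y : L, algebraMap L (AlgebraicClosure L) Y = X := by
      set P : Polynomial (AlgebraicClosure L) :=
        Polynomial.X ^ (q ^ 3) - Polynomial.X with hP
      have hq2 : 2 ≤ q := by
        rw [hq]
        calc 2 ≤ p := hp.two_le
        _ ≤ p ^ k := Nat.le_self_pow hk.ne' p
      have hq3 : 2 ≤ q ^ 3 := le_trans hq2 (Nat.le_self_pow (by norm_num) q)
      have hdeg : P.natDegree = q ^ 3 := by
        rw [hP, Polynomial.natDegree_sub_eq_left_of_natDegree_lt, Polynomial.natDegree_X_pow]
        rw [Polynomial.natDegree_X, Polynomial.natDegree_X_pow]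
        omega
      have hP0 : P ≠ 0 := by
        intro h
        rw [h, Polynomial.natDegree_zero] at hdeg
        omega
      have hroot : ∀ x : AlgebraicClosure L, x ^ (q ^ 3) = x → x ∈ P.roots.toFinset := by
        intro x hx
        rw [Multiset.mem_toFinset, Polynomial.mem_roots hP0]
        simp [hP, Polynomial.IsRoot, sub_eq_zero, hx]
      set T : Finset (AlgebraicClosure L) :=
        Finset.univ.image (algebraMap L (AlgebraicClosure L)) with hT
      have hTsub : T ⊆ P.roots.toFinset := by
        intro x hx
        rw [hT, Finset.mem_image] at hx
        obtain ⟨y, _, rfl⟩ := hx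
        apply hroot
        rw [← map_pow, ← hL, FiniteField.pow_card]
      by_contra hc
      push_neg at hc
      have hXT : X ∉ T := by
        rw [hT, Finset.mem_image]
        rintro ⟨y, _, hy⟩
        exact hc y hy
      have hsub2 : insert X T ⊆ P.roots.toFinset :=
        Finset.insert_subset (hroot X hX3) hTsub
      have hcard1 : (insert X T).card = q ^ 3 + 1 := by
        rw [Finset.card_insert_of_notMem hXT, hT,
          Finset.card_image_of_injective _ inj, Finset.card_univ, hL]
      have hcard2 : (insert X T).card ≤ q ^ 3 := by
        calc (insert X T).card ≤ P.roots.toFinset.card := Finset.card_le_card hsub2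
        _ ≤ Multiset.card P.roots := P.roots.toFinset_card_le
        _ ≤ P.natDegree := P.card_roots'
        _ = q ^ 3 := hdeg
      omega
    obtain ⟨Y, hY⟩ := hmem
    refine ⟨Y, hY, ?_, ?_⟩
    · apply inj
      rw [map_pow, hY, map_one]
      exact hNu
    · apply inj
      rw [map_pow, map_add, map_one, hY, map_neg, map_one, ← hv]
      exact hNv
  · -- converse direction
    rintro ⟨Y, hY, hNu, hNv⟩
    have hq1 : (Y + 1) ^ q = Y ^ q + 1 := by
      rw [hq, add_pow_char_pow Y 1 p k, one_pow]
    have hq2f : (Y + 1) ^ (q ^ 2) = Y ^ (q ^ 2) + 1 := by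
      have hqq : q ^ 2 = p ^ (k * 2) := by rw [hq, ← pow_mul]
      rw [hqq, add_pow_char_pow Y 1 p (k * 2), one_pow]
    obtain ⟨w, hw⟩ : ∃ w : L, w = Y + 1 := ⟨_, rfl⟩
    rw [← hw] at hq1 hq2f hNv
    have hY0 : Y ≠ 0 := by
      intro h
      rw [h, zero_pow (by positivity)] at hNu
      exact zero_ne_one hNu
    have hw0 : w ≠ 0 := by
      intro h
      rw [h, zero_pow (by positivity)] at hNv
      exact (neg_ne_zero.mpr (one_ne_zero)) hNv.symm
    have step1 : (Y ^ (q + 1) + Y ^ q + 1) * (Y ^ (q + 1) + Y + 1) =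
        Y ^ (q + 1) * w ^ (q + 1) + w ^ (q + 1) + Y ^ (q + 1) := by
      linear_combination (-(Y ^ (q + 1) + 1) * w) * hq1 +
        (-(Y ^ (q + 1) + 1) * (Y ^ q + 1)) * hw
    have step2 : (Y ^ (q + 1) * w ^ (q + 1) + w ^ (q + 1) + Y ^ (q + 1)) *
        (Y ^ (q ^ 2) * w ^ (q ^ 2)) = 0 := by
      linear_combination (w ^ (q ^ 2 + q + 1) + w ^ (q ^ 2)) * hNu +
        (Y ^ (q ^ 2) + 1) * hNv + hq2f
    have key : ((Y ^ (q + 1) + Y ^ q + 1) * (Y ^ (q + 1) + Y + 1)) *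
        (Y ^ (q ^ 2) * w ^ (q ^ 2)) = 0 := by rw [step1]; exact step2
    have hnz : Y ^ (q ^ 2) * w ^ (q ^ 2) ≠ 0 :=
      mul_ne_zero (pow_ne_zero _ hY0) (pow_ne_zero _ hw0)
    have hLzero : (Y ^ (q + 1) + Y ^ q + 1) * (Y ^ (q + 1) + Y + 1) = 0 :=
      (mul_eq_zero.mp key).resolve_right hnz
    have hmap := congrArg (algebraMap L (AlgebraicClosure L)) hLzero
    simpa [map_mul, map_add, map_pow, map_one, hY] using hmap
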